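/- For a continuously differentiable function f on ℝ² vanishing outside a compact set, and for every angle α and every shift u, one has cos(α)·ℜ(∂f/∂y)(α,u) − sin(α)·ℜ(∂f/∂x)(α,u) = 0. -/

import Mathlib

open Real MeasureTheory

/-- The Radon transform of `f : ℝ × ℝ → ℝ` at angle `α` and shift `u`. -/
noncomputable def radon (f : ℝ × ℝ → ℝ) (α u : ℝ) : ℝ :=
  ∫ w : ℝ, f (u * Real.cos α - w * Real.sin α, u * Real.sin α + w * Real.cos α)

set_option maxHeartbeats 1000000 in
/-- Lemma 3.3: `cos α · ℜ(∂f/∂y)(α,u) − sin α · ℜ(∂f/∂x)(α,u) = 0`. -/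
theorem radon_tangential_deriv_zero (f : ℝ × ℝ → ℝ) (hf : ContDiff ℝ 1 f)
    (hsupp : HasCompactSupport f) (α u : ℝ) :
    Real.cos α * radon (fun p => fderiv ℝ f p (0, 1)) α u
      - Real.sin α * radon (fun p => fderiv ℝ f p (1, 0)) α u = 0 := by
  set L : ℝ → ℝ × ℝ := fun w =>
    (u * Real.cos α - w * Real.sin α, u * Real.sin α + w * Real.cos α) with hLdef
  set g : ℝ → ℝ := fun w => f (L w) with hg
  have hLcont : Continuous L := by fun_prop
  have hd : ∀ x y : ℝ, dist (L x) (L y)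
      = max (|x - y| * |Real.sin α|) (|x - y| * |Real.cos α|) := by
    intro x y
    simp only [hLdef, Prod.dist_eq, Real.dist_eq]
    congr 1
    · rw [abs_sub_comm x y, ← abs_mul]; congr 1; ring
    · rw [← abs_mul]; congr 1; ring
  -- L is a closed embedding
  have hLanti : AntilipschitzWith 2 L := by
    apply AntilipschitzWith.of_le_mul_dist
    intro x y
    rw [hd x y, Real.dist_eq]
    push_cast
    rcases le_total |Real.sin α| |Real.cos α| with h | h
    · rw [max_eq_right (mul_le_mul_of_nonneg_left h (abs_nonneg _))]
      have hc : 1 ≤ 2 * |Real.cos α| := by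
        nlinarith [Real.sin_sq_add_cos_sq α, sq_abs (Real.sin α), sq_abs (Real.cos α),
          abs_nonneg (Real.cos α), Real.abs_cos_le_one α,
          mul_self_le_mul_self (abs_nonneg (Real.sin α)) h,
          mul_nonneg (sub_nonneg.mpr (Real.abs_cos_le_one α)) (abs_nonneg (Real.cos α))]
      nlinarith [abs_nonneg (x - y)]
    · rw [max_eq_left (mul_le_mul_of_nonneg_left h (abs_nonneg _))]
      have hc : 1 ≤ 2 * |Real.sin α| := by
        nlinarith [Real.sin_sq_add_cos_sq α, sq_abs (Real.sin α), sq_abs (Real.cos α),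
          abs_nonneg (Real.sin α), Real.abs_sin_le_one α,
          mul_self_le_mul_self (abs_nonneg (Real.cos α)) h,
          mul_nonneg (sub_nonneg.mpr (Real.abs_sin_le_one α)) (abs_nonneg (Real.sin α))]
      nlinarith [abs_nonneg (x - y)]
  have hLlip : LipschitzWith 1 L := by
    apply LipschitzWith.of_dist_le_mul
    intro x y
    rw [hd x y, Real.dist_eq]
    push_cast
    rw [one_mul]
    apply max_le <;> calc
      _ ≤ |x - y| * 1 := mul_le_mul_of_nonneg_left (by first
          | exact Real.abs_sin_le_one α | exact Real.abs_cos_le_one α) (abs_nonneg _)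
      _ = |x - y| := mul_one _
  have hLclosed : Topology.IsClosedEmbedding L := hLanti.isClosedEmbedding hLlip.uniformContinuous
  -- compact support of composites
  have hcomp : ∀ {h : ℝ × ℝ → ℝ}, HasCompactSupport h → HasCompactSupport (fun w => h (L w)) :=
    fun hh => hh.comp_isClosedEmbedding hLclosed
  -- derivative of L
  have hLderiv : ∀ w, HasDerivAt L (-Real.sin α, Real.cos α) w := by
    intro w
    have h1 : HasDerivAt (fun w : ℝ => u * Real.cos α - w * Real.sin α) (-Real.sin α) w := by
      simpa using ((hasDerivAt_id w).mul_const (Real.sin α)).const_sub (u * Real.cos α)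
    have h2 : HasDerivAt (fun w : ℝ => u * Real.sin α + w * Real.cos α) (Real.cos α) w := by
      simpa using ((hasDerivAt_id w).mul_const (Real.cos α)).const_add (u * Real.sin α)
    exact h1.prodMk h2
  have hgderiv : ∀ w, HasDerivAt g (fderiv ℝ f (L w) (-Real.sin α, Real.cos α)) w := fun w =>
    ((hf.differentiable one_ne_zero (L w)).hasFDerivAt).comp_hasDerivAt w (hLderiv w)
  have hgsupp : HasCompactSupport g := hcomp hsupp
  have hgC1 : ContDiff ℝ 1 g := hf.comp (by fun_prop)
  -- integral of deriv g is zero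
  have key : ∫ w : ℝ, fderiv ℝ f (L w) (-Real.sin α, Real.cos α) = 0 := by
    have hderiv_eq : (fun w => fderiv ℝ f (L w) (-Real.sin α, Real.cos α)) = deriv g := by
      funext w; exact ((hgderiv w).deriv).symm
    rw [hderiv_eq]
    have hcont : Continuous (deriv g) := hgC1.continuous_deriv le_rfl
    have hint : Integrable (deriv g) := hcont.integrable_of_hasCompactSupport hgsupp.deriv
    rw [← intervalIntegral.integral_Iic_add_Ioi (b := 0) hint.integrableOn hint.integrableOn,
      hgsupp.integral_Iic_deriv_eq hgC1 0, hgsupp.integral_Ioi_deriv_eq hgC1 0]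
    ring
  -- split the directional derivative
  have hvec : ((-Real.sin α, Real.cos α) : ℝ × ℝ)
      = (-Real.sin α) • ((1 : ℝ), (0 : ℝ)) + Real.cos α • ((0 : ℝ), (1 : ℝ)) := by
    simp [Prod.ext_iff]
  have hsplit : ∀ w, fderiv ℝ f (L w) (-Real.sin α, Real.cos α)
      = Real.cos α * fderiv ℝ f (L w) (0, 1) - Real.sin α * fderiv ℝ f (L w) (1, 0) := by
    intro w
    rw [hvec]
    simp only [map_add, ContinuousLinearMap.map_smul, smul_eq_mul]
    ring
  -- integrability of the two component integrands
  have hcont2 : Continuous fun p : ℝ × ℝ => fderiv ℝ f p ((0 : ℝ), (1 : ℝ)) :=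
    (hf.continuous_fderiv one_ne_zero).clm_apply continuous_const
  have hcont1 : Continuous fun p : ℝ × ℝ => fderiv ℝ f p ((1 : ℝ), (0 : ℝ)) :=
    (hf.continuous_fderiv one_ne_zero).clm_apply continuous_const
  have hsupp' : HasCompactSupport (fderiv ℝ f) := hsupp.fderiv ℝ
  have hsupp2 : HasCompactSupport fun p : ℝ × ℝ => fderiv ℝ f p ((0 : ℝ), (1 : ℝ)) :=
    hsupp'.comp_left (g := fun T : ℝ × ℝ →L[ℝ] ℝ => T (0, 1)) rfl
  have hsupp1 : HasCompactSupport fun p : ℝ × ℝ => fderiv ℝ f p ((1 : ℝ), (0 : ℝ)) :=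
    hsupp'.comp_left (g := fun T : ℝ × ℝ →L[ℝ] ℝ => T (1, 0)) rfl
  have hint2 : Integrable fun w => fderiv ℝ f (L w) ((0 : ℝ), (1 : ℝ)) :=
    (hcont2.comp hLcont).integrable_of_hasCompactSupport (hcomp hsupp2)
  have hint1 : Integrable fun w => fderiv ℝ f (L w) ((1 : ℝ), (0 : ℝ)) :=
    (hcont1.comp hLcont).integrable_of_hasCompactSupport (hcomp hsupp1)
  -- conclude
  have hfinal : Real.cos α * radon (fun p => fderiv ℝ f p (0, 1)) α u
      - Real.sin α * radon (fun p => fderiv ℝ f p (1, 0)) α u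
      = ∫ w : ℝ, fderiv ℝ f (L w) (-Real.sin α, Real.cos α) := by
    simp only [radon, ← hLdef]
    rw [← integral_const_mul, ← integral_const_mul,
      ← integral_sub (hint2.const_mul _) (hint1.const_mul _)]
    exact integral_congr_ae (Filter.Eventually.of_forall fun w => (hsplit w).symm)
  rw [hfinal, key]
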